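/- Let (T, X, Y) be drawn from the Razborov distribution (n = 4l−1), let A, B form the Markov chain A ↔ X ↔ Y ↔ B with Pr[A = B = 1] > 0, let (X', Y', T') denote (X, Y, T) conditioned on A = B = 1, and let δ > 0. Define B¹_x = { t₂ : S(X'_{t₂} || X_{t₂}) > 100δn } and B¹_y = { t₁ : S(Y'_{t₁} || Y_{t₁}) > 100δn }, where X'_{t₂}, X_{t₂} are the distributions of X' given T₂' = t₂ and of X given T₂ = t₂ (and symmetrically for Y with T₁). Then: (1) if E_{y←Y'} S(X'_y || X_y) ≤ δn, then Pr[A = B = 1 and T₂ ∈ B¹_x] ≤ (1/100)·Pr[A = B = 1]; and (2) if E_{x←X'} S(Y'_x || Y_x) ≤ δn, then Pr[A = B = 1 and T₁ ∈ B¹_y] ≤ (1/100)·Pr[A = B = 1]. -/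

import Mathlib

open scoped BigOperators ENNReal
open Classical

noncomputable section

/-- `p` is a probability distribution on the finite type `α`. -/
def IsDist {α : Type*} [Fintype α] (p : α → ℝ) : Prop :=
  (∀ a, 0 ≤ p a) ∧ ∑ a, p a = 1

/-- Relative entropy (base 2) `S(p‖q)`. -/
def relEnt {α : Type*} [Fintype α] (p q : α → ℝ) : ℝ :=
  ∑ a, if 0 < p a then p a * Real.logb 2 (p a / q a) else 0

/-- Relative min-entropy `S∞(p‖q) = max_{a : p a > 0} log (p a / q a)`. -/
def relMinEnt {α : Type*} [Fintype α] (p q : α → ℝ) : ℝ :=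
  sSup {r | ∃ a, 0 < p a ∧ r = Real.logb 2 (p a / q a)}

/-- Marginal on the first component. -/
def margX {α β : Type*} [Fintype α] [Fintype β] (p : α × β → ℝ) : α → ℝ :=
  fun x => ∑ y, p (x, y)

/-- Marginal on the second component. -/
def margY {α β : Type*} [Fintype α] [Fintype β] (p : α × β → ℝ) : β → ℝ :=
  fun y => ∑ x, p (x, y)

/-- Conditional distribution of the second component given the first equals `x`. -/
def condY {α β : Type*} [Fintype α] [Fintype β] (p : α × β → ℝ) (x : α) : β → ℝ :=
  fun y => p (x, y) / margX p x

/-- Conditional distribution of the first component given the second equals `y`. -/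
def condX {α β : Type*} [Fintype α] [Fintype β] (p : α × β → ℝ) (y : β) : α → ℝ :=
  fun x => p (x, y) / margY p y

/-- `crent^μ_𝒳(λ) = E_{x←X₁} S((Y₁)_x ‖ Y_x)`. -/
def crentX {α β : Type*} [Fintype α] [Fintype β] (lam mu : α × β → ℝ) : ℝ :=
  ∑ x, margX lam x * relEnt (condY lam x) (condY mu x)

/-- `crent^μ_𝒴(λ) = E_{y←Y₁} S((X₁)_y ‖ X_y)`. -/
def crentY {α β : Type*} [Fintype α] [Fintype β] (lam mu : α × β → ℝ) : ℝ :=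
  ∑ y, margY lam y * relEnt (condX lam y) (condX mu y)

/-- `λ` is one-way for `μ` with respect to `𝒳`: `λ(y|x) = μ(y|x)` on the support of `λ`. -/
def OneWayX {α β : Type*} [Fintype α] [Fintype β] (lam mu : α × β → ℝ) : Prop :=
  ∀ x y, 0 < lam (x, y) → condY lam x y = condY mu x y

/-- `λ` is one-way for `μ` with respect to `𝒴`: `λ(x|y) = μ(x|y)` on the support of `λ`. -/
def OneWayY {α β : Type*} [Fintype α] [Fintype β] (lam mu : α × β → ℝ) : Prop :=
  ∀ x y, 0 < lam (x, y) → condX lam y x = condX mu y x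

/-- `λ` is SM-like for `μ`. -/
def SMLike {α β : Type*} [Fintype α] [Fintype β] (lam mu : α × β → ℝ) : Prop :=
  ∃ θ : α × β → ℝ, IsDist θ ∧ OneWayX θ mu ∧ OneWayY lam θ

/-- `err_{f,S}(λ) = min_{z ∈ S} Pr_{(x,y)←λ}[(x,y,z) ∉ f]`. -/
def errRel {α β γ : Type*} [Fintype α] [Fintype β] (f : Set (α × β × γ)) (S : Set γ)
    (lam : α × β → ℝ) : ℝ :=
  sInf {e | ∃ z ∈ S, e = ∑ p : α × β, if (p.1, p.2, z) ∉ f then lam p else 0}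

/-- `ess^μ(f,S) = 1 − Pr_{(x,y)←μ}[∃ z ∉ S, (x,y,z) ∈ f]`. -/
def ess {α β γ : Type*} [Fintype α] [Fintype β] (f : Set (α × β × γ)) (S : Set γ)
    (mu : α × β → ℝ) : ℝ :=
  1 - ∑ p : α × β, if ∃ z ∉ S, (p.1, p.2, z) ∈ f then mu p else 0

/-- The two-way `ε`-error conditional relative entropy bound `crent^{2,μ}_ε(f,S)`
(`+∞` if no feasible `λ` exists). -/
def crent2 {α β γ : Type*} [Fintype α] [Fintype β] (f : Set (α × β × γ)) (S : Set γ)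
    (mu : α × β → ℝ) (ε : ℝ) : ℝ≥0∞ :=
  sInf {c | ∃ lam : α × β → ℝ, IsDist lam ∧ SMLike lam mu ∧ errRel f S lam ≤ ε ∧
    c = ENNReal.ofReal (crentX lam mu + crentY lam mu)}

/-- The two-way `ε`-error relative min-entropy bound `ment^{2,μ}_ε(f,S)`
(`+∞` if no feasible `λ` exists). -/
def ment2 {α β γ : Type*} [Fintype α] [Fintype β] (f : Set (α × β × γ)) (S : Set γ)
    (mu : α × β → ℝ) (ε : ℝ) : ℝ≥0∞ :=
  sInf {c | ∃ lam : α × β → ℝ, IsDist lam ∧ SMLike lam mu ∧ errRel f S lam ≤ ε ∧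
    c = ENNReal.ofReal (relMinEnt lam mu)}

/-- The `k`-fold product distribution `μ^k` on `𝒳^k × 𝒴^k`. -/
def prodDist {α β : Type*} [Fintype α] [Fintype β] (mu : α × β → ℝ) (k : ℕ) :
    (Fin k → α) × (Fin k → β) → ℝ :=
  fun p => ∏ i, mu (p.1 i, p.2 i)

/-- The `k`-fold product relation `f^k`. -/
def relPow {α β γ : Type*} (f : Set (α × β × γ)) (k : ℕ) :
    Set ((Fin k → α) × (Fin k → β) × (Fin k → γ)) :=
  {p | ∀ i, (p.1 i, p.2.1 i, p.2.2 i) ∈ f}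


/-- A valid value `t = (t₁, t₂, i)` of the random partition `T`:
`t₁, t₂` are disjoint sets of size `2l − 1` not containing `i`
(together with `{i}` they partition `[n]` when `n = 4l − 1`). -/
def ValidT (l : ℕ) {n : ℕ} (t : Finset (Fin n) × Finset (Fin n) × Fin n) : Prop :=
  t.1.card = 2 * l - 1 ∧ t.2.1.card = 2 * l - 1 ∧ Disjoint t.1 t.2.1 ∧
    t.2.2 ∉ t.1 ∧ t.2.2 ∉ t.2.1

/-- The support of the Razborov distribution: triples `(t, x, y)` with `t` a valid
partition, `x ⊆ t₁ ∪ {i}` of size `l`, and `y ⊆ t₂ ∪ {i}` of size `l`. -/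
def razSupp (l n : ℕ) :
    Finset ((Finset (Fin n) × Finset (Fin n) × Fin n) × Finset (Fin n) × Finset (Fin n)) :=
  Finset.univ.filter (fun q =>
    ValidT l q.1 ∧ q.2.1 ⊆ insert q.1.2.2 q.1.1 ∧ q.2.1.card = l ∧
      q.2.2 ⊆ insert q.1.2.2 q.1.2.1 ∧ q.2.2.card = l)

/-- The Razborov distribution, as the joint distribution of `(T, X, Y)`:
uniform over its support (all conditional fibers have equal size). -/
def razDist (l n : ℕ) :
    (Finset (Fin n) × Finset (Fin n) × Fin n) × Finset (Fin n) × Finset (Fin n) → ℝ :=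
  fun q => if q ∈ razSupp l n then 1 / ((razSupp l n).card : ℝ) else 0

/-- The marginal of the Razborov distribution on `(X, Y)`. -/
def razXY (l n : ℕ) : Finset (Fin n) × Finset (Fin n) → ℝ :=
  fun p => ∑ t : Finset (Fin n) × Finset (Fin n) × Fin n, razDist l n (t, p.1, p.2)

/-- The set-disjointness function as a relation: `(x, y, z) ∈ disjRel` iff
`z = DISJ(x,y)`, i.e. `z = true` iff `x ∩ y = ∅`. -/
def disjRel (n : ℕ) : Set (Finset (Fin n) × Finset (Fin n) × Bool) :=
  {q | q.2.2 = decide (q.1 ∩ q.2.1 = ∅)}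


/-- Abbreviation for the sample space of `(T, X, Y)`. -/
abbrev RazSample (n : ℕ) :=
  (Finset (Fin n) × Finset (Fin n) × Fin n) × Finset (Fin n) × Finset (Fin n)

/-- `Pr[A = B = 1]`, where conditioned on `(T,X,Y) = (t,x,y)` the bits `A`, `B` are
independent with `Pr[A=1] = a x` and `Pr[B=1] = b y` (Markov chain `A ↔ X ↔ Y ↔ B`). -/
def prAB (l n : ℕ) (a b : Finset (Fin n) → ℝ) : ℝ :=
  ∑ q : RazSample n, razDist l n q * a q.2.1 * b q.2.2

/-- Distribution of `X'` (that is, `X` conditioned on `A = B = 1`) given `T₂' = t₂`. -/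
def condX'T2 (l n : ℕ) (a b : Finset (Fin n) → ℝ) (t₂ : Finset (Fin n)) :
    Finset (Fin n) → ℝ := fun x =>
  (∑ q : RazSample n, if q.1.2.1 = t₂ ∧ q.2.1 = x then razDist l n q * a q.2.1 * b q.2.2 else 0) /
  (∑ q : RazSample n, if q.1.2.1 = t₂ then razDist l n q * a q.2.1 * b q.2.2 else 0)

/-- Distribution of `X` given `T₂ = t₂`. -/
def condXT2 (l n : ℕ) (t₂ : Finset (Fin n)) : Finset (Fin n) → ℝ := fun x =>
  (∑ q : RazSample n, if q.1.2.1 = t₂ ∧ q.2.1 = x then razDist l n q else 0) /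
  (∑ q : RazSample n, if q.1.2.1 = t₂ then razDist l n q else 0)

/-- Distribution of `Y'` (that is, `Y` conditioned on `A = B = 1`) given `T₁' = t₁`. -/
def condY'T1 (l n : ℕ) (a b : Finset (Fin n) → ℝ) (t₁ : Finset (Fin n)) :
    Finset (Fin n) → ℝ := fun y =>
  (∑ q : RazSample n, if q.1.1 = t₁ ∧ q.2.2 = y then razDist l n q * a q.2.1 * b q.2.2 else 0) /
  (∑ q : RazSample n, if q.1.1 = t₁ then razDist l n q * a q.2.1 * b q.2.2 else 0)

/-- Distribution of `Y` given `T₁ = t₁`. -/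
def condYT1 (l n : ℕ) (t₁ : Finset (Fin n)) : Finset (Fin n) → ℝ := fun y =>
  (∑ q : RazSample n, if q.1.1 = t₁ ∧ q.2.2 = y then razDist l n q else 0) /
  (∑ q : RazSample n, if q.1.1 = t₁ then razDist l n q else 0)

/-- Marginal distribution of `Y'`. -/
def margY' (l n : ℕ) (a b : Finset (Fin n) → ℝ) : Finset (Fin n) → ℝ := fun y =>
  (∑ q : RazSample n, if q.2.2 = y then razDist l n q * a q.2.1 * b q.2.2 else 0) /
    prAB l n a b

/-- Marginal distribution of `X'`. -/
def margX' (l n : ℕ) (a b : Finset (Fin n) → ℝ) : Finset (Fin n) → ℝ := fun x =>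
  (∑ q : RazSample n, if q.2.1 = x then razDist l n q * a q.2.1 * b q.2.2 else 0) /
    prAB l n a b

/-- Distribution of `X'` given `Y' = y`. -/
def condX'Y' (l n : ℕ) (a b : Finset (Fin n) → ℝ) (y : Finset (Fin n)) :
    Finset (Fin n) → ℝ := fun x =>
  (∑ q : RazSample n, if q.2.1 = x ∧ q.2.2 = y then razDist l n q * a q.2.1 * b q.2.2 else 0) /
  (∑ q : RazSample n, if q.2.2 = y then razDist l n q * a q.2.1 * b q.2.2 else 0)

/-- Distribution of `X` given `Y = y`. -/
def condXgY (l n : ℕ) (y : Finset (Fin n)) : Finset (Fin n) → ℝ := fun x =>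
  (∑ q : RazSample n, if q.2.1 = x ∧ q.2.2 = y then razDist l n q else 0) /
  (∑ q : RazSample n, if q.2.2 = y then razDist l n q else 0)

/-- Distribution of `Y'` given `X' = x`. -/
def condY'X' (l n : ℕ) (a b : Finset (Fin n) → ℝ) (x : Finset (Fin n)) :
    Finset (Fin n) → ℝ := fun y =>
  (∑ q : RazSample n, if q.2.1 = x ∧ q.2.2 = y then razDist l n q * a q.2.1 * b q.2.2 else 0) /
  (∑ q : RazSample n, if q.2.1 = x then razDist l n q * a q.2.1 * b q.2.2 else 0)

/-- Distribution of `Y` given `X = x`. -/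
def condYgX (l n : ℕ) (x : Finset (Fin n)) : Finset (Fin n) → ℝ := fun y =>
  (∑ q : RazSample n, if q.2.1 = x ∧ q.2.2 = y then razDist l n q else 0) /
  (∑ q : RazSample n, if q.2.1 = x then razDist l n q else 0)


def Fx (l n : ℕ) (t x : Finset (Fin n)) : ℝ :=
  if t.card = 2 * l - 1 ∧ x ⊆ tᶜ ∧ x.card = l then 1 else 0

def Gy (l n : ℕ) (t y : Finset (Fin n)) : ℝ :=
  (if y.card = l then ((tᶜ.filter (fun i => y ⊆ insert i t)).card : ℝ) else 0) /
    ((razSupp l n).card : ℝ)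

lemma mem_razSupp_iff (l n : ℕ) (q : RazSample n) :
    q ∈ razSupp l n ↔ ((q.1.1.card = 2 * l - 1 ∧ q.1.2.1.card = 2 * l - 1 ∧
      Disjoint q.1.1 q.1.2.1 ∧ q.1.2.2 ∉ q.1.1 ∧ q.1.2.2 ∉ q.1.2.1) ∧
      q.2.1 ⊆ insert q.1.2.2 q.1.1 ∧ q.2.1.card = l ∧
      q.2.2 ⊆ insert q.1.2.2 q.1.2.1 ∧ q.2.2.card = l) := by
  rw [razSupp, Finset.mem_filter]
  exact ⟨fun h => h.2, fun h => ⟨Finset.mem_univ _, h⟩⟩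

lemma count_card1 (l n : ℕ) (hl : 0 < l) (hn : n = 4 * l - 1) (t x y : Finset (Fin n)) :
    (Finset.univ.filter (fun q : RazSample n =>
        (q.1.2.1 = t ∧ q.2.1 = x ∧ q.2.2 = y) ∧ q ∈ razSupp l n)).card =
      if (t.card = 2 * l - 1 ∧ x ⊆ tᶜ ∧ x.card = l) ∧ y.card = l then
        (tᶜ.filter (fun i => y ⊆ insert i t)).card else 0 := by
  have hcompl : tᶜ.card = n - t.card := by
    rw [Finset.card_compl, Fintype.card_fin]
  by_cases hc : (t.card = 2 * l - 1 ∧ x ⊆ tᶜ ∧ x.card = l) ∧ y.card = l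
  · rw [if_pos hc]
    obtain ⟨⟨ht, hxt, hxc⟩, hyc⟩ := hc
    apply Finset.card_nbij' (fun q => q.1.2.2) (fun i => ((tᶜ.erase i, t, i), x, y))
    · rintro ⟨⟨t1, t2, i⟩, x', y'⟩ hq
      simp only [Finset.mem_coe, Finset.mem_filter, Finset.mem_univ, true_and] at hq
      obtain ⟨⟨ht2, hx2, hy2⟩, hmem⟩ := hq
      rw [mem_razSupp_iff] at hmem
      dsimp only at ht2 hx2 hy2 hmem ⊢
      obtain ⟨⟨_, _, _, _, hit2⟩, _, _, hys, _⟩ := hmem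
      rw [Finset.mem_coe, Finset.mem_filter, Finset.mem_compl]
      rw [ht2] at hit2
      rw [hy2, ht2] at hys
      exact ⟨hit2, hys⟩
    · intro i hi
      rw [Finset.mem_coe, Finset.mem_filter, Finset.mem_compl] at hi
      obtain ⟨hit, hysub⟩ := hi
      have hitc : i ∈ tᶜ := Finset.mem_compl.mpr hit
      refine Finset.mem_filter.mpr ⟨Finset.mem_univ _, ⟨rfl, rfl, rfl⟩,
        (mem_razSupp_iff l n _).mpr ?_⟩
      dsimp only
      refine ⟨⟨?_, ht, ?_, Finset.notMem_erase _ _, hit⟩, ?_, hxc, hysub, hyc⟩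
      · rw [Finset.card_erase_of_mem hitc, hcompl, ht]
        omega
      · refine Finset.disjoint_left.mpr fun a ha hat => ?_
        exact (Finset.mem_compl.mp (Finset.mem_of_mem_erase ha)) hat
      · rw [Finset.insert_erase hitc]
        exact hxt
    · rintro ⟨⟨t1, t2, i⟩, x', y'⟩ hq
      simp only [Finset.mem_coe, Finset.mem_filter, Finset.mem_univ, true_and] at hq
      obtain ⟨⟨ht2, hx2, hy2⟩, hmem⟩ := hq
      rw [mem_razSupp_iff] at hmem
      dsimp only at ht2 hx2 hy2 hmem ⊢
      obtain ⟨⟨ht1c, ht2c, hdisj, hi1, hit2⟩, _, _, _, _⟩ := hmem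
      rw [ht2] at hdisj hit2
      have hic : i ∈ tᶜ := Finset.mem_compl.mpr hit2
      have hsub : t1 ⊆ tᶜ.erase i := by
        intro a ha
        rw [Finset.mem_erase, Finset.mem_compl]
        exact ⟨fun hai => hi1 (hai ▸ ha), fun hat => Finset.disjoint_left.mp hdisj ha hat⟩
      have hcard : (tᶜ.erase i).card ≤ t1.card := by
        rw [Finset.card_erase_of_mem hic, hcompl, ht, ht1c]
        omega
      have h11 : t1 = tᶜ.erase i := Finset.eq_of_subset_of_card_le hsub hcard
      rw [ht2, hx2, hy2, h11]
    · intro i hi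
      rfl
  · rw [if_neg hc]
    rw [Finset.card_eq_zero, Finset.filter_eq_empty_iff]
    intro q _
    rintro ⟨⟨ht2, hx2, hy2⟩, hmem⟩
    rw [mem_razSupp_iff] at hmem
    obtain ⟨⟨ht1c, ht2c, hdisj, hi1, hi2⟩, hxsub, hxc, hysub, hyc⟩ := hmem
    apply hc
    refine ⟨⟨ht2 ▸ ht2c, ?_, hx2 ▸ hxc⟩, hy2 ▸ hyc⟩
    rw [← hx2, ← ht2]
    intro a ha
    have h2 := hxsub ha
    rw [Finset.mem_insert] at h2
    rw [Finset.mem_compl]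
    rcases h2 with rfl | hat1
    · exact hi2
    · exact fun hat => Finset.disjoint_left.mp hdisj hat1 hat

def lam {T X Y : Type*} (F : T → X → ℝ) (G : T → Y → ℝ) (a : X → ℝ) (b : Y → ℝ)
    (t : T) (x : X) (y : Y) : ℝ := F t x * a x * (G t y * b y)

def nu {T X Y : Type*} (F : T → X → ℝ) (G : T → Y → ℝ) (t : T) (x : X) (y : Y) : ℝ :=
  F t x * G t y

lemma count1 (l n : ℕ) (hl : 0 < l) (hn : n = 4 * l - 1) (t x y : Finset (Fin n)) :
    (∑ q : RazSample n, if q.1.2.1 = t ∧ q.2.1 = x ∧ q.2.2 = y then razDist l n q else 0) =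
      nu (Fx l n) (Gy l n) t x y := by
  have e1 : ∀ q : RazSample n,
      (if q.1.2.1 = t ∧ q.2.1 = x ∧ q.2.2 = y then razDist l n q else 0) =
      if (q.1.2.1 = t ∧ q.2.1 = x ∧ q.2.2 = y) ∧ q ∈ razSupp l n then
        1 / ((razSupp l n).card : ℝ) else 0 := by
    intro q
    rw [razDist]
    by_cases h1 : q.1.2.1 = t ∧ q.2.1 = x ∧ q.2.2 = y <;>
      by_cases h2 : q ∈ razSupp l n <;> simp [h1, h2]
  rw [Finset.sum_congr rfl fun q _ => e1 q, ← Finset.sum_filter, Finset.sum_const,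
    nsmul_eq_mul, count_card1 l n hl hn t x y]
  show _ = Fx l n t x * Gy l n t y
  rw [Fx, Gy]
  by_cases hc1 : t.card = 2 * l - 1 ∧ x ⊆ tᶜ ∧ x.card = l <;>
    by_cases hc2 : y.card = l <;> simp [hc1, hc2, mul_one_div, div_eq_mul_inv]

lemma count1ab (l n : ℕ) (hl : 0 < l) (hn : n = 4 * l - 1) (a b : Finset (Fin n) → ℝ)
    (t x y : Finset (Fin n)) :
    (∑ q : RazSample n, if q.1.2.1 = t ∧ q.2.1 = x ∧ q.2.2 = y then
        razDist l n q * a q.2.1 * b q.2.2 else 0) =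
      lam (Fx l n) (Gy l n) a b t x y := by
  have e1 : ∀ q : RazSample n,
      (if q.1.2.1 = t ∧ q.2.1 = x ∧ q.2.2 = y then razDist l n q * a q.2.1 * b q.2.2 else 0) =
      (if q.1.2.1 = t ∧ q.2.1 = x ∧ q.2.2 = y then razDist l n q else 0) * (a x * b y) := by
    intro q
    by_cases h : q.1.2.1 = t ∧ q.2.1 = x ∧ q.2.2 = y
    · rw [if_pos h, if_pos h, h.2.1, h.2.2]; ring
    · rw [if_neg h, if_neg h, zero_mul]
  rw [Finset.sum_congr rfl fun q _ => e1 q, ← Finset.sum_mul, count1 l n hl hn t x y]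
  show nu (Fx l n) (Gy l n) t x y * (a x * b y) = _
  simp only [lam, nu]; ring

def Fy (l n : ℕ) (t y : Finset (Fin n)) : ℝ :=
  if t.card = 2 * l - 1 ∧ y ⊆ tᶜ ∧ y.card = l then 1 else 0

def Gx (l n : ℕ) (t x : Finset (Fin n)) : ℝ :=
  (if x.card = l then ((tᶜ.filter (fun i => x ⊆ insert i t)).card : ℝ) else 0) /
    ((razSupp l n).card : ℝ)

lemma count_card2 (l n : ℕ) (hl : 0 < l) (hn : n = 4 * l - 1) (t x y : Finset (Fin n)) :
    (Finset.univ.filter (fun q : RazSample n =>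
        (q.1.1 = t ∧ q.2.2 = y ∧ q.2.1 = x) ∧ q ∈ razSupp l n)).card =
      if (t.card = 2 * l - 1 ∧ y ⊆ tᶜ ∧ y.card = l) ∧ x.card = l then
        (tᶜ.filter (fun i => x ⊆ insert i t)).card else 0 := by
  have hcompl : tᶜ.card = n - t.card := by
    rw [Finset.card_compl, Fintype.card_fin]
  by_cases hc : (t.card = 2 * l - 1 ∧ y ⊆ tᶜ ∧ y.card = l) ∧ x.card = l
  · rw [if_pos hc]
    obtain ⟨⟨ht, hyt, hyc⟩, hxc⟩ := hc
    apply Finset.card_nbij' (fun q => q.1.2.2) (fun i => ((t, tᶜ.erase i, i), x, y))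
    · rintro ⟨⟨t1, t2, i⟩, x', y'⟩ hq
      simp only [Finset.mem_coe, Finset.mem_filter, Finset.mem_univ, true_and] at hq
      obtain ⟨⟨ht1, hy2, hx2⟩, hmem⟩ := hq
      rw [mem_razSupp_iff] at hmem
      dsimp only at ht1 hx2 hy2 hmem ⊢
      obtain ⟨⟨_, _, _, hit1, _⟩, hxs, _, _, _⟩ := hmem
      rw [Finset.mem_coe, Finset.mem_filter, Finset.mem_compl]
      rw [ht1] at hit1
      rw [hx2, ht1] at hxs
      exact ⟨hit1, hxs⟩
    · intro i hi
      rw [Finset.mem_coe, Finset.mem_filter, Finset.mem_compl] at hi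
      obtain ⟨hit, hxsub⟩ := hi
      have hitc : i ∈ tᶜ := Finset.mem_compl.mpr hit
      refine Finset.mem_filter.mpr ⟨Finset.mem_univ _, ⟨rfl, rfl, rfl⟩,
        (mem_razSupp_iff l n _).mpr ?_⟩
      dsimp only
      refine ⟨⟨ht, ?_, ?_, hit, Finset.notMem_erase _ _⟩, hxsub, hxc, ?_, hyc⟩
      · rw [Finset.card_erase_of_mem hitc, hcompl, ht]
        omega
      · refine Finset.disjoint_left.mpr fun a hat ha => ?_
        exact (Finset.mem_compl.mp (Finset.mem_of_mem_erase ha)) hat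
      · rw [Finset.insert_erase hitc]
        exact hyt
    · rintro ⟨⟨t1, t2, i⟩, x', y'⟩ hq
      simp only [Finset.mem_coe, Finset.mem_filter, Finset.mem_univ, true_and] at hq
      obtain ⟨⟨ht1, hy2, hx2⟩, hmem⟩ := hq
      rw [mem_razSupp_iff] at hmem
      dsimp only at ht1 hx2 hy2 hmem ⊢
      obtain ⟨⟨ht1c, ht2c, hdisj, hit1, hit2⟩, _, _, _, _⟩ := hmem
      rw [ht1] at hdisj hit1
      have hic : i ∈ tᶜ := Finset.mem_compl.mpr hit1
      have hsub : t2 ⊆ tᶜ.erase i := by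
        intro a ha
        rw [Finset.mem_erase, Finset.mem_compl]
        exact ⟨fun hai => hit2 (hai ▸ ha), fun hat => Finset.disjoint_right.mp hdisj ha hat⟩
      have hcard : (tᶜ.erase i).card ≤ t2.card := by
        rw [Finset.card_erase_of_mem hic, hcompl, ht, ht2c]
        omega
      have h22 : t2 = tᶜ.erase i := Finset.eq_of_subset_of_card_le hsub hcard
      rw [ht1, hx2, hy2, h22]
    · intro i hi
      rfl
  · rw [if_neg hc]
    rw [Finset.card_eq_zero, Finset.filter_eq_empty_iff]
    intro q _
    rintro ⟨⟨ht1, hy2, hx2⟩, hmem⟩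
    rw [mem_razSupp_iff] at hmem
    obtain ⟨⟨ht1c, ht2c, hdisj, hi1, hi2⟩, hxsub, hxc, hysub, hyc⟩ := hmem
    apply hc
    refine ⟨⟨ht1 ▸ ht1c, ?_, hy2 ▸ hyc⟩, hx2 ▸ hxc⟩
    rw [← hy2, ← ht1]
    intro a ha
    have h2 := hysub ha
    rw [Finset.mem_insert] at h2
    rw [Finset.mem_compl]
    rcases h2 with rfl | hat2
    · exact hi1
    · exact fun hat => Finset.disjoint_right.mp hdisj hat2 hat
  
lemma count2 (l n : ℕ) (hl : 0 < l) (hn : n = 4 * l - 1) (t x y : Finset (Fin n)) :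
    (∑ q : RazSample n, if q.1.1 = t ∧ q.2.2 = y ∧ q.2.1 = x then razDist l n q else 0) =
      nu (Fy l n) (Gx l n) t y x := by
  have e1 : ∀ q : RazSample n,
      (if q.1.1 = t ∧ q.2.2 = y ∧ q.2.1 = x then razDist l n q else 0) =
      if (q.1.1 = t ∧ q.2.2 = y ∧ q.2.1 = x) ∧ q ∈ razSupp l n then
        1 / ((razSupp l n).card : ℝ) else 0 := by
    intro q
    rw [razDist]
    by_cases h1 : q.1.1 = t ∧ q.2.2 = y ∧ q.2.1 = x <;>
      by_cases h2 : q ∈ razSupp l n <;> simp [h1, h2]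
  rw [Finset.sum_congr rfl fun q _ => e1 q, ← Finset.sum_filter, Finset.sum_const,
    nsmul_eq_mul, count_card2 l n hl hn t x y]
  show _ = Fy l n t y * Gx l n t x
  rw [Fy, Gx]
  by_cases hc1 : t.card = 2 * l - 1 ∧ y ⊆ tᶜ ∧ y.card = l <;>
    by_cases hc2 : x.card = l <;> simp [hc1, hc2, mul_one_div, div_eq_mul_inv]

lemma count2ab (l n : ℕ) (hl : 0 < l) (hn : n = 4 * l - 1) (a b : Finset (Fin n) → ℝ)
    (t x y : Finset (Fin n)) :
    (∑ q : RazSample n, if q.1.1 = t ∧ q.2.2 = y ∧ q.2.1 = x then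
        razDist l n q * a q.2.1 * b q.2.2 else 0) =
      lam (Fy l n) (Gx l n) b a t y x := by
  have e1 : ∀ q : RazSample n,
      (if q.1.1 = t ∧ q.2.2 = y ∧ q.2.1 = x then razDist l n q * a q.2.1 * b q.2.2 else 0) =
      (if q.1.1 = t ∧ q.2.2 = y ∧ q.2.1 = x then razDist l n q else 0) * (a x * b y) := by
    intro q
    by_cases h : q.1.1 = t ∧ q.2.2 = y ∧ q.2.1 = x
    · rw [if_pos h, if_pos h, h.2.1, h.2.2]; ring
    · rw [if_neg h, if_neg h, zero_mul]
  rw [Finset.sum_congr rfl fun q _ => e1 q, ← Finset.sum_mul, count2 l n hl hn t x y]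
  show nu (Fy l n) (Gx l n) t y x * (a x * b y) = _
  simp only [lam, nu]; ring

lemma sum_comm3' {A B C : Type*} [Fintype A] [Fintype B] [Fintype C] (f : A → B → C → ℝ) :
    ∑ a, ∑ b, ∑ c, f a b c = ∑ c, ∑ b, ∑ a, f a b c :=
  calc ∑ a, ∑ b, ∑ c, f a b c
      = ∑ a, ∑ c, ∑ b, f a b c := Finset.sum_congr rfl fun a _ => Finset.sum_comm
    _ = ∑ c, ∑ a, ∑ b, f a b c := Finset.sum_comm
    _ = ∑ c, ∑ b, ∑ a, f a b c := Finset.sum_congr rfl fun c _ => Finset.sum_comm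

lemma grp_one {Q V : Type*} [Fintype Q] [Fintype V] [DecidableEq V] (π : Q → V)
    (P : Q → Prop) [DecidablePred P] (g : Q → ℝ) :
    (∑ q, if P q then g q else 0) = ∑ v, ∑ q, if P q ∧ π q = v then g q else 0 := by
  rw [Finset.sum_comm]
  refine Finset.sum_congr rfl fun q _ => ?_
  by_cases h : P q <;> simp [h, Finset.sum_ite_eq]

lemma grp_full {Q V : Type*} [Fintype Q] [Fintype V] [DecidableEq V] (π : Q → V) (g : Q → ℝ) :
    (∑ q, g q) = ∑ v, ∑ q, if π q = v then g q else 0 := by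
  rw [Finset.sum_comm]
  refine Finset.sum_congr rfl fun q _ => ?_
  simp [Finset.sum_ite_eq]

lemma sum_ite_congr' {Q : Type*} [Fintype Q] {P P' : Q → Prop} [DecidablePred P]
    [DecidablePred P'] (h : ∀ q, P q ↔ P' q) (g : Q → ℝ) : (∑ q, if P q then g q else 0) = ∑ q, if P' q then g q else 0 :=
  Finset.sum_congr rfl fun q _ => if_congr (h q) rfl rfl

section Bridges
variable (l n : ℕ) (hl : 0 < l) (hn : n = 4 * l - 1) (a b : Finset (Fin n) → ℝ)
include hl hn

-- part 1 bridges
lemma bridge1 (t x : Finset (Fin n)) :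
    (∑ q : RazSample n, if q.1.2.1 = t ∧ q.2.1 = x then
        razDist l n q * a q.2.1 * b q.2.2 else 0) =
      ∑ y, lam (Fx l n) (Gy l n) a b t x y := by
  rw [grp_one (fun q : RazSample n => q.2.2) (fun q => q.1.2.1 = t ∧ q.2.1 = x)
    (fun q => razDist l n q * a q.2.1 * b q.2.2)]
  refine Finset.sum_congr rfl fun y _ => ?_
  rw [sum_ite_congr' (fun q => and_assoc)]
  exact count1ab l n hl hn a b t x y

lemma bridge1n (t x : Finset (Fin n)) :
    (∑ q : RazSample n, if q.1.2.1 = t ∧ q.2.1 = x then razDist l n q else 0) =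
      ∑ y, nu (Fx l n) (Gy l n) t x y := by
  rw [grp_one (fun q : RazSample n => q.2.2) (fun q => q.1.2.1 = t ∧ q.2.1 = x)
    (fun q => razDist l n q)]
  refine Finset.sum_congr rfl fun y _ => ?_
  rw [sum_ite_congr' (fun q => and_assoc)]
  exact count1 l n hl hn t x y

lemma bridge2 (t : Finset (Fin n)) :
    (∑ q : RazSample n, if q.1.2.1 = t then razDist l n q * a q.2.1 * b q.2.2 else 0) =
      ∑ x, ∑ y, lam (Fx l n) (Gy l n) a b t x y := by
  rw [grp_one (fun q : RazSample n => q.2.1) (fun q => q.1.2.1 = t)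
    (fun q => razDist l n q * a q.2.1 * b q.2.2)]
  exact Finset.sum_congr rfl fun x _ => bridge1 l n hl hn a b t x

lemma bridge2n (t : Finset (Fin n)) :
    (∑ q : RazSample n, if q.1.2.1 = t then razDist l n q else 0) =
      ∑ x, ∑ y, nu (Fx l n) (Gy l n) t x y := by
  rw [grp_one (fun q : RazSample n => q.2.1) (fun q => q.1.2.1 = t)
    (fun q => razDist l n q)]
  exact Finset.sum_congr rfl fun x _ => bridge1n l n hl hn t x

lemma bridge4 (x y : Finset (Fin n)) :
    (∑ q : RazSample n, if q.2.1 = x ∧ q.2.2 = y then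
        razDist l n q * a q.2.1 * b q.2.2 else 0) =
      ∑ t, lam (Fx l n) (Gy l n) a b t x y := by
  rw [grp_one (fun q : RazSample n => q.1.2.1) (fun q => q.2.1 = x ∧ q.2.2 = y)
    (fun q => razDist l n q * a q.2.1 * b q.2.2)]
  refine Finset.sum_congr rfl fun t _ => ?_
  exact (sum_ite_congr' (P' := fun q : RazSample n => q.1.2.1 = t ∧ q.2.1 = x ∧ q.2.2 = y)
    (fun q => by tauto) _).trans (count1ab l n hl hn a b t x y)

lemma bridge4n (x y : Finset (Fin n)) :
    (∑ q : RazSample n, if q.2.1 = x ∧ q.2.2 = y then razDist l n q else 0) =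
      ∑ t, nu (Fx l n) (Gy l n) t x y := by
  rw [grp_one (fun q : RazSample n => q.1.2.1) (fun q => q.2.1 = x ∧ q.2.2 = y)
    (fun q => razDist l n q)]
  refine Finset.sum_congr rfl fun t _ => ?_
  exact (sum_ite_congr' (P' := fun q : RazSample n => q.1.2.1 = t ∧ q.2.1 = x ∧ q.2.2 = y)
    (fun q => by tauto) _).trans (count1 l n hl hn t x y)

lemma bridge3 (y : Finset (Fin n)) :
    (∑ q : RazSample n, if q.2.2 = y then razDist l n q * a q.2.1 * b q.2.2 else 0) =
      ∑ t, ∑ x, lam (Fx l n) (Gy l n) a b t x y := by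
  rw [grp_one (fun q : RazSample n => q.1.2.1) (fun q => q.2.2 = y)
    (fun q => razDist l n q * a q.2.1 * b q.2.2)]
  refine Finset.sum_congr rfl fun t _ => ?_
  rw [grp_one (fun q : RazSample n => q.2.1) (fun q => q.2.2 = y ∧ q.1.2.1 = t)
    (fun q => razDist l n q * a q.2.1 * b q.2.2)]
  refine Finset.sum_congr rfl fun x _ => ?_
  exact (sum_ite_congr' (P' := fun q : RazSample n => q.1.2.1 = t ∧ q.2.1 = x ∧ q.2.2 = y)
    (fun q => by tauto) _).trans (count1ab l n hl hn a b t x y)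

lemma bridge3n (y : Finset (Fin n)) :
    (∑ q : RazSample n, if q.2.2 = y then razDist l n q else 0) =
      ∑ t, ∑ x, nu (Fx l n) (Gy l n) t x y := by
  rw [grp_one (fun q : RazSample n => q.1.2.1) (fun q => q.2.2 = y)
    (fun q => razDist l n q)]
  refine Finset.sum_congr rfl fun t _ => ?_
  rw [grp_one (fun q : RazSample n => q.2.1) (fun q => q.2.2 = y ∧ q.1.2.1 = t)
    (fun q => razDist l n q)]
  refine Finset.sum_congr rfl fun x _ => ?_
  exact (sum_ite_congr' (P' := fun q : RazSample n => q.1.2.1 = t ∧ q.2.1 = x ∧ q.2.2 = y)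
    (fun q => by tauto) _).trans (count1 l n hl hn t x y)

lemma bridge5 :
    prAB l n a b = ∑ t, ∑ x, ∑ y, lam (Fx l n) (Gy l n) a b t x y := by
  rw [prAB, grp_full (fun q : RazSample n => q.1.2.1)
    (fun q => razDist l n q * a q.2.1 * b q.2.2)]
  exact Finset.sum_congr rfl fun t _ => bridge2 l n hl hn a b t

-- part 2 bridges
lemma bridge1' (t y : Finset (Fin n)) :
    (∑ q : RazSample n, if q.1.1 = t ∧ q.2.2 = y then
        razDist l n q * a q.2.1 * b q.2.2 else 0) =
      ∑ x, lam (Fy l n) (Gx l n) b a t y x := by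
  rw [grp_one (fun q : RazSample n => q.2.1) (fun q => q.1.1 = t ∧ q.2.2 = y)
    (fun q => razDist l n q * a q.2.1 * b q.2.2)]
  refine Finset.sum_congr rfl fun x _ => ?_
  rw [sum_ite_congr' (fun q => and_assoc)]
  exact count2ab l n hl hn a b t x y

lemma bridge1n' (t y : Finset (Fin n)) :
    (∑ q : RazSample n, if q.1.1 = t ∧ q.2.2 = y then razDist l n q else 0) =
      ∑ x, nu (Fy l n) (Gx l n) t y x := by
  rw [grp_one (fun q : RazSample n => q.2.1) (fun q => q.1.1 = t ∧ q.2.2 = y)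
    (fun q => razDist l n q)]
  refine Finset.sum_congr rfl fun x _ => ?_
  rw [sum_ite_congr' (fun q => and_assoc)]
  exact count2 l n hl hn t x y

lemma bridge2' (t : Finset (Fin n)) :
    (∑ q : RazSample n, if q.1.1 = t then razDist l n q * a q.2.1 * b q.2.2 else 0) =
      ∑ y, ∑ x, lam (Fy l n) (Gx l n) b a t y x := by
  rw [grp_one (fun q : RazSample n => q.2.2) (fun q => q.1.1 = t)
    (fun q => razDist l n q * a q.2.1 * b q.2.2)]
  exact Finset.sum_congr rfl fun y _ => bridge1' l n hl hn a b t y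

lemma bridge2n' (t : Finset (Fin n)) :
    (∑ q : RazSample n, if q.1.1 = t then razDist l n q else 0) =
      ∑ y, ∑ x, nu (Fy l n) (Gx l n) t y x := by
  rw [grp_one (fun q : RazSample n => q.2.2) (fun q => q.1.1 = t)
    (fun q => razDist l n q)]
  exact Finset.sum_congr rfl fun y _ => bridge1n' l n hl hn t y

lemma bridge4' (x y : Finset (Fin n)) :
    (∑ q : RazSample n, if q.2.1 = x ∧ q.2.2 = y then
        razDist l n q * a q.2.1 * b q.2.2 else 0) =
      ∑ t, lam (Fy l n) (Gx l n) b a t y x := by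
  rw [grp_one (fun q : RazSample n => q.1.1) (fun q => q.2.1 = x ∧ q.2.2 = y)
    (fun q => razDist l n q * a q.2.1 * b q.2.2)]
  refine Finset.sum_congr rfl fun t _ => ?_
  exact (sum_ite_congr' (P' := fun q : RazSample n => q.1.1 = t ∧ q.2.2 = y ∧ q.2.1 = x)
    (fun q => by tauto) _).trans (count2ab l n hl hn a b t x y)

lemma bridge4n' (x y : Finset (Fin n)) :
    (∑ q : RazSample n, if q.2.1 = x ∧ q.2.2 = y then razDist l n q else 0) =
      ∑ t, nu (Fy l n) (Gx l n) t y x := by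
  rw [grp_one (fun q : RazSample n => q.1.1) (fun q => q.2.1 = x ∧ q.2.2 = y)
    (fun q => razDist l n q)]
  refine Finset.sum_congr rfl fun t _ => ?_
  exact (sum_ite_congr' (P' := fun q : RazSample n => q.1.1 = t ∧ q.2.2 = y ∧ q.2.1 = x)
    (fun q => by tauto) _).trans (count2 l n hl hn t x y)

lemma bridge3' (x : Finset (Fin n)) :
    (∑ q : RazSample n, if q.2.1 = x then razDist l n q * a q.2.1 * b q.2.2 else 0) =
      ∑ t, ∑ y, lam (Fy l n) (Gx l n) b a t y x := by
  rw [grp_one (fun q : RazSample n => q.1.1) (fun q => q.2.1 = x)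
    (fun q => razDist l n q * a q.2.1 * b q.2.2)]
  refine Finset.sum_congr rfl fun t _ => ?_
  rw [grp_one (fun q : RazSample n => q.2.2) (fun q => q.2.1 = x ∧ q.1.1 = t)
    (fun q => razDist l n q * a q.2.1 * b q.2.2)]
  refine Finset.sum_congr rfl fun y _ => ?_
  exact (sum_ite_congr' (P' := fun q : RazSample n => q.1.1 = t ∧ q.2.2 = y ∧ q.2.1 = x)
    (fun q => by tauto) _).trans (count2ab l n hl hn a b t x y)

lemma bridge3n' (x : Finset (Fin n)) :
    (∑ q : RazSample n, if q.2.1 = x then razDist l n q else 0) =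
      ∑ t, ∑ y, nu (Fy l n) (Gx l n) t y x := by
  rw [grp_one (fun q : RazSample n => q.1.1) (fun q => q.2.1 = x)
    (fun q => razDist l n q)]
  refine Finset.sum_congr rfl fun t _ => ?_
  rw [grp_one (fun q : RazSample n => q.2.2) (fun q => q.2.1 = x ∧ q.1.1 = t)
    (fun q => razDist l n q)]
  refine Finset.sum_congr rfl fun y _ => ?_
  exact (sum_ite_congr' (P' := fun q : RazSample n => q.1.1 = t ∧ q.2.2 = y ∧ q.2.1 = x)
    (fun q => by tauto) _).trans (count2 l n hl hn t x y)

lemma bridge5' :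
    prAB l n a b = ∑ t, ∑ y, ∑ x, lam (Fy l n) (Gx l n) b a t y x := by
  rw [prAB, grp_full (fun q : RazSample n => q.1.1)
    (fun q => razDist l n q * a q.2.1 * b q.2.2)]
  exact Finset.sum_congr rfl fun t _ => bridge2' l n hl hn a b t

end Bridges

lemma sum_pos_exists {α : Type*} [Fintype α] {f : α → ℝ} (h : 0 < ∑ i, f i) : ∃ i, 0 < f i := by
  by_contra hc; push_neg at hc
  exact absurd (Finset.sum_nonpos fun i _ => hc i) (not_le.mpr h)

lemma mul_pos_parts {p q : ℝ} (hp : 0 ≤ p) (hq : 0 ≤ q) (h : 0 < p * q) : 0 < p ∧ 0 < q := by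
  constructor <;> nlinarith

lemma sum_zero_of_nonneg {α : Type*} [Fintype α] {f : α → ℝ} (hf : ∀ i, 0 ≤ f i)
    (h : ¬ 0 < ∑ i, f i) : ∀ i, f i = 0 := by
  have h0 : ∑ i, f i = 0 := le_antisymm (not_lt.mp h) (Finset.sum_nonneg fun i _ => hf i)
  intro i
  exact (Finset.sum_eq_zero_iff_of_nonneg (fun i _ => hf i)).mp h0 i (Finset.mem_univ i)

lemma gibbs {α : Type*} [Fintype α] (p q : α → ℝ) (hp0 : ∀ i, 0 ≤ p i)
    (hp1 : ∑ i, p i = 1) (hpq : ∀ i, 0 < p i → 0 < q i)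
    (hq1 : (∑ i, if 0 < p i then q i else 0) ≤ 1) : 0 ≤ relEnt p q := by
  have hL : (0:ℝ) < Real.log 2 := Real.log_pos one_lt_two
  have key : ∀ i, (p i - (if 0 < p i then q i else 0)) / Real.log 2 ≤
      (if 0 < p i then p i * Real.logb 2 (p i / q i) else 0) := by
    intro i
    by_cases h : 0 < p i
    · simp only [h, if_true]
      have hqi := hpq i h
      have hlog : Real.log (q i / p i) ≤ q i / p i - 1 :=
        Real.log_le_sub_one_of_pos (div_pos hqi h)
      have hinv : Real.log (p i / q i) = - Real.log (q i / p i) := by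
        rw [← Real.log_inv]; congr 1; rw [inv_div]
      have h2 : p i - q i ≤ p i * Real.log (p i / q i) := by
        rw [hinv]
        have : p i * (q i / p i) = q i := by field_simp
        nlinarith
      rw [Real.logb, mul_div_assoc']
      exact (div_le_div_iff_of_pos_right hL).mpr h2
    · have hp : p i = 0 := le_antisymm (not_lt.mp h) (hp0 i)
      simp [h, hp]
  have h1 : relEnt p q = ∑ i, if 0 < p i then p i * Real.logb 2 (p i / q i) else 0 := rfl
  rw [h1]
  have h2 : (0:ℝ) ≤ ∑ i, (p i - (if 0 < p i then q i else 0)) / Real.log 2 := by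
    rw [← Finset.sum_div]
    apply div_nonneg _ hL.le
    rw [Finset.sum_sub_distrib]
    linarith
  exact h2.trans (Finset.sum_le_sum fun i _ => key i)

lemma div_pos_iff_right {m S : ℝ} (hS : 0 < S) : 0 < m / S ↔ 0 < m := by
  constructor
  · intro h
    have : m = m / S * S := by field_simp
    rw [this]; positivity
  · intro h; exact div_pos h hS

lemma mass_mul_relEnt {α : Type*} [Fintype α] (m : α → ℝ) (hm : ∀ i, 0 ≤ m i) (q : α → ℝ) :
    (∑ j, m j) * relEnt (fun i => m i / ∑ j, m j) q =
      ∑ i, if 0 < m i then m i * Real.logb 2 ((m i / ∑ j, m j) / q i) else 0 := by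
  by_cases hS : 0 < ∑ j, m j
  · unfold relEnt
    rw [Finset.mul_sum]
    refine Finset.sum_congr rfl fun i _ => ?_
    by_cases h : 0 < m i
    · rw [if_pos ((div_pos_iff_right hS).mpr h), if_pos h, ← mul_assoc,
        mul_div_cancel₀ _ (ne_of_gt hS)]
    · rw [if_neg (fun hh => h ((div_pos_iff_right hS).mp hh)), if_neg h, mul_zero]
  · have h0 := sum_zero_of_nonneg hm hS
    have hs0 : ∑ j, m j = 0 := by simp [h0]
    simp [hs0, h0]

lemma sum_ite_pos_mul {β : Type*} [Fintype β] (f : β → ℝ) (hf : ∀ j, 0 ≤ f j) (c : ℝ) :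
    (if 0 < ∑ j, f j then (∑ j, f j) * c else 0) = ∑ j, if 0 < f j then f j * c else 0 := by
  by_cases h : 0 < ∑ j, f j
  · rw [if_pos h, Finset.sum_mul]
    refine Finset.sum_congr rfl fun j _ => ?_
    by_cases hj : 0 < f j
    · rw [if_pos hj]
    · rw [if_neg hj, le_antisymm (not_lt.mp hj) (hf j), zero_mul]
  · rw [if_neg h]
    have h0 := sum_zero_of_nonneg hf h
    simp [h0]

lemma sum_comm3 {A B C : Type*} [Fintype A] [Fintype B] [Fintype C] (f : A → B → C → ℝ) :
    ∑ a, ∑ b, ∑ c, f a b c = ∑ c, ∑ b, ∑ a, f a b c :=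
  calc ∑ a, ∑ b, ∑ c, f a b c
      = ∑ a, ∑ c, ∑ b, f a b c := Finset.sum_congr rfl fun a _ => Finset.sum_comm
    _ = ∑ c, ∑ a, ∑ b, f a b c := Finset.sum_comm
    _ = ∑ c, ∑ b, ∑ a, f a b c := Finset.sum_congr rfl fun c _ => Finset.sum_comm

lemma le_sum2 {A B : Type*} [Fintype A] [Fintype B] (f : A → B → ℝ) (hf : ∀ a b, 0 ≤ f a b)
    (a : A) (b : B) : f a b ≤ ∑ a', ∑ b', f a' b' := by
  calc f a b ≤ ∑ b', f a b' := Finset.single_le_sum (fun b' _ => hf a b') (Finset.mem_univ b)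
    _ ≤ ∑ a', ∑ b', f a' b' :=
        Finset.single_le_sum (fun a' _ => Finset.sum_nonneg fun b' _ => hf a' b')
          (Finset.mem_univ a)

lemma pos_sum2 {A B : Type*} [Fintype A] [Fintype B] {f : A → B → ℝ} (hf : ∀ a b, 0 ≤ f a b)
    {a : A} {b : B} (h : 0 < f a b) : 0 < ∑ a', ∑ b', f a' b' :=
  lt_of_lt_of_le h (le_sum2 f hf a b)




section Abstract
variable {T X Y : Type*} [Fintype T] [Fintype X] [Fintype Y]

lemma abstract_bound (F : T → X → ℝ) (G : T → Y → ℝ) (a : X → ℝ) (b : Y → ℝ)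
    (hF : ∀ t x, 0 ≤ F t x) (hG : ∀ t y, 0 ≤ G t y)
    (ha : ∀ x, 0 ≤ a x) (hb : ∀ y, 0 ≤ b y) (d : ℝ) (hd : 0 < d)
    (hZ : 0 < ∑ t, ∑ x, ∑ y, lam F G a b t x y)
    (hE : ∑ y, ((∑ t, ∑ x, lam F G a b t x y) / ∑ t, ∑ x, ∑ y, lam F G a b t x y) *
        relEnt (fun x => (∑ t, lam F G a b t x y) / ∑ t, ∑ x, lam F G a b t x y)
          (fun x => (∑ t, nu F G t x y) / ∑ t, ∑ x, nu F G t x y) ≤ d) :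
    (∑ t, if 100 * d <
        relEnt (fun x => (∑ y, lam F G a b t x y) / ∑ x, ∑ y, lam F G a b t x y)
          (fun x => (∑ y, nu F G t x y) / ∑ x, ∑ y, nu F G t x y)
      then ∑ x, ∑ y, lam F G a b t x y else 0)
      ≤ 1 / 100 * (∑ t, ∑ x, ∑ y, lam F G a b t x y) := by
  have hL0 : ∀ t x y, 0 ≤ lam F G a b t x y := fun t x y =>
    mul_nonneg (mul_nonneg (hF t x) (ha x)) (mul_nonneg (hG t y) (hb y))
  have hN0 : ∀ t x y, 0 ≤ nu F G t x y := fun t x y => mul_nonneg (hF t x) (hG t y)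
  have hfacts : ∀ {t x y}, 0 < lam F G a b t x y →
      0 < F t x ∧ 0 < a x ∧ 0 < G t y ∧ 0 < b y := by
    intro t x y h
    obtain ⟨h1, h2⟩ := mul_pos_parts (mul_nonneg (hF t x) (ha x)) (mul_nonneg (hG t y) (hb y)) h
    obtain ⟨hFp, hap⟩ := mul_pos_parts (hF t x) (ha x) h1
    obtain ⟨hGp, hbp⟩ := mul_pos_parts (hG t y) (hb y) h2
    exact ⟨hFp, hap, hGp, hbp⟩
  have hLofN : ∀ {t x y}, 0 < lam F G a b t x y → 0 < nu F G t x y := by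
    intro t x y h
    obtain ⟨h1, _, h2, _⟩ := hfacts h
    exact mul_pos h1 h2
  -- the divergence of X' given t₂ against X given t₂
  set D : T → ℝ := fun t =>
    relEnt (fun x => (∑ y, lam F G a b t x y) / ∑ x, ∑ y, lam F G a b t x y)
      (fun x => (∑ y, nu F G t x y) / ∑ x, ∑ y, nu F G t x y) with hD
  -- nonnegativity of D on the support
  have KEY2 : ∀ t, 0 < ∑ x, ∑ y, lam F G a b t x y → 0 ≤ D t := by
    intro t hq
    obtain ⟨x0, hx0⟩ := sum_pos_exists hq
    obtain ⟨y0, hy0⟩ := sum_pos_exists hx0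
    have hV : 0 < ∑ x, ∑ y, nu F G t x y :=
      pos_sum2 (fun x y => hN0 t x y) (hLofN hy0)
    rw [hD]
    apply gibbs
    · intro x
      exact div_nonneg (Finset.sum_nonneg fun y _ => hL0 t x y) hq.le
    · rw [← Finset.sum_div, div_self (ne_of_gt hq)]
    · intro x hx
      have hmx : 0 < ∑ y, lam F G a b t x y := (div_pos_iff_right hq).mp hx
      obtain ⟨y, hy⟩ := sum_pos_exists hmx
      have hN : 0 < nu F G t x y := hLofN hy
      have h1 : 0 < ∑ y, nu F G t x y :=
        lt_of_lt_of_le hN (Finset.single_le_sum (fun y _ => hN0 t x y) (Finset.mem_univ y))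
      exact div_pos h1 hV
    · calc (∑ x, if 0 < (∑ y, lam F G a b t x y) / ∑ x, ∑ y, lam F G a b t x y then
            (∑ y, nu F G t x y) / ∑ x, ∑ y, nu F G t x y else 0)
          ≤ ∑ x, (∑ y, nu F G t x y) / ∑ x, ∑ y, nu F G t x y := by
            apply Finset.sum_le_sum
            intro x _
            have : 0 ≤ (∑ y, nu F G t x y) / ∑ x, ∑ y, nu F G t x y :=
              div_nonneg (Finset.sum_nonneg fun y _ => hN0 t x y) hV.le
            split_ifs <;> simp [this]
        _ = 1 := by rw [← Finset.sum_div, div_self (ne_of_gt hV)]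
  -- main estimate
  have KEY1 : ∑ t, (∑ x, ∑ y, lam F G a b t x y) * D t ≤
      (∑ t, ∑ x, ∑ y, lam F G a b t x y) * d := by
    have step1 : ∀ t, (∑ x, ∑ y, lam F G a b t x y) * D t =
        ∑ x, ∑ y, (if 0 < lam F G a b t x y then lam F G a b t x y *
          Real.logb 2 (((∑ y, lam F G a b t x y) / ∑ x, ∑ y, lam F G a b t x y) /
            ((∑ y, nu F G t x y) / ∑ x, ∑ y, nu F G t x y)) else 0) := by
      intro t
      rw [hD]
      rw [mass_mul_relEnt (fun x => ∑ y, lam F G a b t x y)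
        (fun x => Finset.sum_nonneg fun y _ => hL0 t x y)
        (fun x => (∑ y, nu F G t x y) / ∑ x, ∑ y, nu F G t x y)]
      exact Finset.sum_congr rfl fun x _ =>
        sum_ite_pos_mul (fun y => lam F G a b t x y) (fun y => hL0 t x y) _
    have step2 : ∀ t x y, 0 < lam F G a b t x y →
        Real.logb 2 (((∑ y, lam F G a b t x y) / ∑ x, ∑ y, lam F G a b t x y) /
            ((∑ y, nu F G t x y) / ∑ x, ∑ y, nu F G t x y)) =
        Real.logb 2 (((∑ t, lam F G a b t x y) / ∑ x, ∑ t, lam F G a b t x y) /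
            ((∑ t, nu F G t x y) / ∑ x, ∑ t, nu F G t x y)) -
        Real.logb 2 (((∑ x, lam F G a b t x y) / ∑ t, ∑ x, lam F G a b t x y) /
            ((∑ x, nu F G t x y) / ∑ t, ∑ x, nu F G t x y)) := by
      intro t x y h
      obtain ⟨hFp, hap, hGp, hbp⟩ := hfacts h
      have hNp : 0 < nu F G t x y := mul_pos hFp hGp
      -- factorizations
      have ePsi : ∀ x', ∑ y', lam F G a b t x' y' = F t x' * a x' * ∑ y', G t y' * b y' :=
        fun x' => (Finset.mul_sum _ _ _).symm
      have eXY : ∑ x', ∑ y', lam F G a b t x' y' =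
          (∑ x', F t x' * a x') * ∑ y', G t y' * b y' := by
        rw [Finset.sum_mul]; exact Finset.sum_congr rfl fun x' _ => ePsi x'
      have ePsiN : ∀ x', ∑ y', nu F G t x' y' = F t x' * ∑ y', G t y' :=
        fun x' => (Finset.mul_sum _ _ _).symm
      have eXYN : ∑ x', ∑ y', nu F G t x' y' = (∑ x', F t x') * ∑ y', G t y' := by
        rw [Finset.sum_mul]; exact Finset.sum_congr rfl fun x' _ => ePsiN x'
      have eT : ∀ x', ∑ t', lam F G a b t' x' y = a x' * b y * ∑ t', nu F G t' x' y :=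
        fun x' => by
          rw [Finset.mul_sum]
          exact Finset.sum_congr rfl fun t' _ => by simp only [lam, nu]; ring
      have eXT : ∑ x', ∑ t', lam F G a b t' x' y =
          b y * ∑ x', a x' * ∑ t', nu F G t' x' y := by
        rw [Finset.mul_sum]
        exact Finset.sum_congr rfl fun x' _ => by rw [eT x']; ring
      have eXL : ∑ x', lam F G a b t x' y = G t y * b y * ∑ x', F t x' * a x' := by
        rw [Finset.mul_sum]
        exact Finset.sum_congr rfl fun x' _ => by simp only [lam]; ring
      have eTXL : ∑ t', ∑ x', lam F G a b t' x' y =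
          b y * ∑ x', a x' * ∑ t', nu F G t' x' y := by
        rw [Finset.sum_comm]; exact eXT
      have eXN : ∑ x', nu F G t x' y = G t y * ∑ x', F t x' := by
        rw [Finset.mul_sum]
        exact Finset.sum_congr rfl fun x' _ => by simp only [nu]; ring
      have eTXN : ∑ t', ∑ x', nu F G t' x' y = ∑ x', ∑ t', nu F G t' x' y :=
        Finset.sum_comm
      -- positivity of atoms
      have hPsi : 0 < ∑ y', G t y' * b y' :=
        lt_of_lt_of_le (mul_pos hGp hbp)
          (Finset.single_le_sum (fun y' _ => mul_nonneg (hG t y') (hb y')) (Finset.mem_univ y))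
      have hPhi' : 0 < ∑ x', F t x' * a x' :=
        lt_of_lt_of_le (mul_pos hFp hap)
          (Finset.single_le_sum (fun x' _ => mul_nonneg (hF t x') (ha x')) (Finset.mem_univ x))
      have hGam : 0 < ∑ y', G t y' :=
        lt_of_lt_of_le hGp (Finset.single_le_sum (fun y' _ => hG t y') (Finset.mem_univ y))
      have hPhi : 0 < ∑ x', F t x' :=
        lt_of_lt_of_le hFp (Finset.single_le_sum (fun x' _ => hF t x') (Finset.mem_univ x))
      have hV1 : 0 < ∑ t', nu F G t' x y :=
        lt_of_lt_of_le hNp (Finset.single_le_sum (fun t' _ => hN0 t' x y) (Finset.mem_univ t))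
      have hW : 0 < ∑ x', a x' * ∑ t', nu F G t' x' y :=
        lt_of_lt_of_le (mul_pos hap hV1)
          (Finset.single_le_sum
            (fun x' _ => mul_nonneg (ha x') (Finset.sum_nonneg fun t' _ => hN0 t' x' y))
            (Finset.mem_univ x))
      have hVV : 0 < ∑ x', ∑ t', nu F G t' x' y :=
        pos_sum2 (fun x' t' => hN0 t' x' y) hNp
      -- the multiplicative identity
      have hmult : ((∑ y, lam F G a b t x y) / ∑ x, ∑ y, lam F G a b t x y) /
            ((∑ y, nu F G t x y) / ∑ x, ∑ y, nu F G t x y) =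
          (((∑ t, lam F G a b t x y) / ∑ x, ∑ t, lam F G a b t x y) /
            ((∑ t, nu F G t x y) / ∑ x, ∑ t, nu F G t x y)) /
          (((∑ x, lam F G a b t x y) / ∑ t, ∑ x, lam F G a b t x y) /
            ((∑ x, nu F G t x y) / ∑ t, ∑ x, nu F G t x y)) := by
        rw [ePsi x, eXY, ePsiN x, eXYN, eT x, eXT, eXL, eTXL, eXN, eTXN]
        field_simp
      rw [hmult]
      have h1 : ((∑ t, lam F G a b t x y) / ∑ x, ∑ t, lam F G a b t x y) /
          ((∑ t, nu F G t x y) / ∑ x, ∑ t, nu F G t x y) ≠ 0 := by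
        have hn : 0 < ∑ t, lam F G a b t x y :=
          lt_of_lt_of_le h (Finset.single_le_sum (fun t' _ => hL0 t' x y) (Finset.mem_univ t))
        have hdd : 0 < ∑ x, ∑ t, lam F G a b t x y := pos_sum2 (fun x' t' => hL0 t' x' y) h
        have hn2 : 0 < ∑ x, ∑ t, nu F G t x y := hVV
        exact (div_pos (div_pos hn hdd) (div_pos hV1 hn2)).ne'
      have h2 : ((∑ x, lam F G a b t x y) / ∑ t, ∑ x, lam F G a b t x y) /
          ((∑ x, nu F G t x y) / ∑ t, ∑ x, nu F G t x y) ≠ 0 := by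
        have hn : 0 < ∑ x, lam F G a b t x y :=
          lt_of_lt_of_le h (Finset.single_le_sum (fun x' _ => hL0 t x' y) (Finset.mem_univ x))
        have hdd : 0 < ∑ t, ∑ x, lam F G a b t x y := pos_sum2 (fun t' x' => hL0 t' x' y) h
        have hsn : 0 < ∑ x, nu F G t x y :=
          lt_of_lt_of_le hNp (Finset.single_le_sum (fun x' _ => hN0 t x' y) (Finset.mem_univ x))
        have hsd : 0 < ∑ t, ∑ x, nu F G t x y := pos_sum2 (fun t' x' => hN0 t' x' y) hNp
        exact (div_pos (div_pos hn hdd) (div_pos hsn hsd)).ne'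
      exact Real.logb_div h1 h2
    have e0 : ∑ t, (∑ x, ∑ y, lam F G a b t x y) * D t =
        (∑ t, ∑ x, ∑ y, if 0 < lam F G a b t x y then lam F G a b t x y *
          Real.logb 2 (((∑ t, lam F G a b t x y) / ∑ x, ∑ t, lam F G a b t x y) /
            ((∑ t, nu F G t x y) / ∑ x, ∑ t, nu F G t x y)) else 0) -
        (∑ t, ∑ x, ∑ y, if 0 < lam F G a b t x y then lam F G a b t x y *
          Real.logb 2 (((∑ x, lam F G a b t x y) / ∑ t, ∑ x, lam F G a b t x y) /
            ((∑ x, nu F G t x y) / ∑ t, ∑ x, nu F G t x y)) else 0) := by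
      rw [← Finset.sum_sub_distrib]
      refine Finset.sum_congr rfl fun t _ => ?_
      rw [step1 t, ← Finset.sum_sub_distrib]
      refine Finset.sum_congr rfl fun x _ => ?_
      rw [← Finset.sum_sub_distrib]
      refine Finset.sum_congr rfl fun y _ => ?_
      by_cases h : 0 < lam F G a b t x y
      · rw [if_pos h, if_pos h, if_pos h, step2 t x y h]; ring
      · rw [if_neg h, if_neg h, if_neg h]; ring
    have eS1 : (∑ t, ∑ x, ∑ y, if 0 < lam F G a b t x y then lam F G a b t x y *
          Real.logb 2 (((∑ t, lam F G a b t x y) / ∑ x, ∑ t, lam F G a b t x y) /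
            ((∑ t, nu F G t x y) / ∑ x, ∑ t, nu F G t x y)) else 0) =
        ∑ y, (∑ x, ∑ t, lam F G a b t x y) *
          relEnt (fun x => (∑ t, lam F G a b t x y) / ∑ x, ∑ t, lam F G a b t x y)
            (fun x => (∑ t, nu F G t x y) / ∑ x, ∑ t, nu F G t x y) := by
      rw [sum_comm3]
      refine Finset.sum_congr rfl fun y _ => ?_
      rw [mass_mul_relEnt (fun x => ∑ t, lam F G a b t x y)
        (fun x => Finset.sum_nonneg fun t _ => hL0 t x y)
        (fun x => (∑ t, nu F G t x y) / ∑ x, ∑ t, nu F G t x y)]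
      refine Finset.sum_congr rfl fun x _ => ?_
      exact (sum_ite_pos_mul (fun t => lam F G a b t x y) (fun t => hL0 t x y) _).symm
    have eS2 : (∑ t, ∑ x, ∑ y, if 0 < lam F G a b t x y then lam F G a b t x y *
          Real.logb 2 (((∑ x, lam F G a b t x y) / ∑ t, ∑ x, lam F G a b t x y) /
            ((∑ x, nu F G t x y) / ∑ t, ∑ x, nu F G t x y)) else 0) =
        ∑ y, (∑ t, ∑ x, lam F G a b t x y) *
          relEnt (fun t => (∑ x, lam F G a b t x y) / ∑ t, ∑ x, lam F G a b t x y)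
            (fun t => (∑ x, nu F G t x y) / ∑ t, ∑ x, nu F G t x y) := by
      rw [sum_comm3]
      refine Finset.sum_congr rfl fun y _ => ?_
      rw [Finset.sum_comm]
      rw [mass_mul_relEnt (fun t => ∑ x, lam F G a b t x y)
        (fun t => Finset.sum_nonneg fun x _ => hL0 t x y)
        (fun t => (∑ x, nu F G t x y) / ∑ t, ∑ x, nu F G t x y)]
      refine Finset.sum_congr rfl fun t _ => ?_
      exact (sum_ite_pos_mul (fun x => lam F G a b t x y) (fun x => hL0 t x y) _).symm
    have hS2nonneg : 0 ≤ ∑ y, (∑ t, ∑ x, lam F G a b t x y) *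
        relEnt (fun t => (∑ x, lam F G a b t x y) / ∑ t, ∑ x, lam F G a b t x y)
          (fun t => (∑ x, nu F G t x y) / ∑ t, ∑ x, nu F G t x y) := by
      apply Finset.sum_nonneg
      intro y _
      have hw0 : 0 ≤ ∑ t, ∑ x, lam F G a b t x y :=
        Finset.sum_nonneg fun t _ => Finset.sum_nonneg fun x _ => hL0 t x y
      rcases hw0.eq_or_lt with h0 | h0
      · rw [← h0, zero_mul]
      · refine mul_nonneg hw0 ?_
        obtain ⟨t0, ht0⟩ := sum_pos_exists h0
        obtain ⟨x0, hx0⟩ := sum_pos_exists ht0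
        have hV : 0 < ∑ t, ∑ x, nu F G t x y := pos_sum2 (fun t x => hN0 t x y) (hLofN hx0)
        apply gibbs
        · intro t
          exact div_nonneg (Finset.sum_nonneg fun x _ => hL0 t x y) h0.le
        · rw [← Finset.sum_div, div_self h0.ne']
        · intro t ht
          have hrt : 0 < ∑ x, lam F G a b t x y := (div_pos_iff_right h0).mp ht
          obtain ⟨x, hx⟩ := sum_pos_exists hrt
          have hsx : 0 < ∑ x, nu F G t x y := lt_of_lt_of_le (hLofN hx)
            (Finset.single_le_sum (fun x' _ => hN0 t x' y) (Finset.mem_univ x))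
          exact div_pos hsx hV
        · calc (∑ t, if 0 < (∑ x, lam F G a b t x y) / ∑ t, ∑ x, lam F G a b t x y then
                (∑ x, nu F G t x y) / ∑ t, ∑ x, nu F G t x y else 0)
              ≤ ∑ t, (∑ x, nu F G t x y) / ∑ t, ∑ x, nu F G t x y := by
                apply Finset.sum_le_sum
                intro t _
                have : 0 ≤ (∑ x, nu F G t x y) / ∑ t, ∑ x, nu F G t x y :=
                  div_nonneg (Finset.sum_nonneg fun x _ => hN0 t x y) hV.le
                split_ifs <;> simp [this]
            _ = 1 := by rw [← Finset.sum_div, div_self hV.ne']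
    have eS1' : (∑ y, (∑ x, ∑ t, lam F G a b t x y) *
          relEnt (fun x => (∑ t, lam F G a b t x y) / ∑ x, ∑ t, lam F G a b t x y)
            (fun x => (∑ t, nu F G t x y) / ∑ x, ∑ t, nu F G t x y)) =
        ∑ y, (∑ t, ∑ x, lam F G a b t x y) *
          relEnt (fun x => (∑ t, lam F G a b t x y) / ∑ t, ∑ x, lam F G a b t x y)
            (fun x => (∑ t, nu F G t x y) / ∑ t, ∑ x, nu F G t x y) := by
      refine Finset.sum_congr rfl fun y _ => ?_
      have h1 : (∑ x, ∑ t, lam F G a b t x y) = ∑ t, ∑ x, lam F G a b t x y := Finset.sum_comm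
      have h2 : (∑ x, ∑ t, nu F G t x y) = ∑ t, ∑ x, nu F G t x y := Finset.sum_comm
      rw [h1, h2]
    have hE' : (∑ y, (∑ t, ∑ x, lam F G a b t x y) *
          relEnt (fun x => (∑ t, lam F G a b t x y) / ∑ t, ∑ x, lam F G a b t x y)
            (fun x => (∑ t, nu F G t x y) / ∑ t, ∑ x, nu F G t x y)) ≤
        (∑ t, ∑ x, ∑ y, lam F G a b t x y) * d := by
      have e3 : ∀ y : Y, (∑ t, ∑ x, lam F G a b t x y) *
            relEnt (fun x => (∑ t, lam F G a b t x y) / ∑ t, ∑ x, lam F G a b t x y)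
              (fun x => (∑ t, nu F G t x y) / ∑ t, ∑ x, nu F G t x y) =
          (∑ t, ∑ x, ∑ y, lam F G a b t x y) *
            (((∑ t, ∑ x, lam F G a b t x y) / ∑ t, ∑ x, ∑ y, lam F G a b t x y) *
              relEnt (fun x => (∑ t, lam F G a b t x y) / ∑ t, ∑ x, lam F G a b t x y)
                (fun x => (∑ t, nu F G t x y) / ∑ t, ∑ x, nu F G t x y)) := by
        intro y
        rw [← mul_assoc, mul_div_assoc', mul_comm (∑ t, ∑ x, ∑ y, lam F G a b t x y),
          mul_div_assoc, div_self hZ.ne', mul_one]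
      calc (∑ y, (∑ t, ∑ x, lam F G a b t x y) *
            relEnt (fun x => (∑ t, lam F G a b t x y) / ∑ t, ∑ x, lam F G a b t x y)
              (fun x => (∑ t, nu F G t x y) / ∑ t, ∑ x, nu F G t x y))
          = (∑ t, ∑ x, ∑ y, lam F G a b t x y) *
            ∑ y, ((∑ t, ∑ x, lam F G a b t x y) / ∑ t, ∑ x, ∑ y, lam F G a b t x y) *
              relEnt (fun x => (∑ t, lam F G a b t x y) / ∑ t, ∑ x, lam F G a b t x y)
                (fun x => (∑ t, nu F G t x y) / ∑ t, ∑ x, nu F G t x y) := by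
            rw [Finset.mul_sum]
            exact Finset.sum_congr rfl fun y _ => e3 y
        _ ≤ (∑ t, ∑ x, ∑ y, lam F G a b t x y) * d :=
            mul_le_mul_of_nonneg_left hE hZ.le
    rw [e0, eS1, eS2, eS1']
    linarith [hS2nonneg, hE']
  -- Markov
  have hc : (0:ℝ) < 100 * d := by linarith
  have markov : ∀ t, (if 100 * d < D t then ∑ x, ∑ y, lam F G a b t x y else 0) ≤
      (∑ x, ∑ y, lam F G a b t x y) * D t / (100 * d) := by
    intro t
    have hq0 : 0 ≤ ∑ x, ∑ y, lam F G a b t x y :=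
      Finset.sum_nonneg fun x _ => Finset.sum_nonneg fun y _ => hL0 t x y
    by_cases h : 100 * d < D t
    · rw [if_pos h, le_div_iff₀ hc]
      exact mul_le_mul_of_nonneg_left h.le hq0
    · rw [if_neg h]
      apply div_nonneg _ hc.le
      rcases hq0.eq_or_lt with h0 | h0
      · rw [← h0]; simp
      · exact mul_nonneg hq0 (KEY2 t h0)
  calc (∑ t, if 100 * d < D t then ∑ x, ∑ y, lam F G a b t x y else 0)
      ≤ ∑ t, (∑ x, ∑ y, lam F G a b t x y) * D t / (100 * d) :=
        Finset.sum_le_sum fun t _ => markov t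
    _ = (∑ t, (∑ x, ∑ y, lam F G a b t x y) * D t) / (100 * d) := by
        rw [Finset.sum_div]
    _ ≤ ((∑ t, ∑ x, ∑ y, lam F G a b t x y) * d) / (100 * d) := by
        apply (div_le_div_iff_of_pos_right hc).mpr KEY1
    _ = 1 / 100 * (∑ t, ∑ x, ∑ y, lam F G a b t x y) := by
        field_simp

end Abstract


/-- With `(T,X,Y)` Razborov-distributed (`n = 4l − 1`), bits
`A, B` forming the Markov chain `A ↔ X ↔ Y ↔ B`, `Pr[A = B = 1] > 0`, primed
variables denoting conditioning on `A = B = 1`, and `δ > 0`: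
(1) if `E_{y←Y'} S(X'_y ‖ X_y) ≤ δn`, then
`Pr[A = B = 1 ∧ T₂ ∈ B¹_x] ≤ (1/100)·Pr[A = B = 1]` where
`B¹_x = {t₂ : S(X'_{t₂} ‖ X_{t₂}) > 100δn}`; and (2) symmetrically for `Y` with
`B¹_y = {t₁ : S(Y'_{t₁} ‖ Y_{t₁}) > 100δn}`. -/
theorem razborov_bad_partition_bound (l n : ℕ) (hl : 0 < l) (hn : n = 4 * l - 1)
    (a b : Finset (Fin n) → ℝ)
    (ha : ∀ x, 0 ≤ a x ∧ a x ≤ 1) (hb : ∀ y, 0 ≤ b y ∧ b y ≤ 1)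
    (hAB : 0 < prAB l n a b) (δ : ℝ) (hδ : 0 < δ) :
    ((∑ y : Finset (Fin n),
        margY' l n a b y * relEnt (condX'Y' l n a b y) (condXgY l n y)) ≤ δ * n →
      (∑ q : RazSample n,
          if 100 * δ * n < relEnt (condX'T2 l n a b q.1.2.1) (condXT2 l n q.1.2.1)
          then razDist l n q * a q.2.1 * b q.2.2 else 0) ≤
        (1 / 100) * prAB l n a b) ∧
    ((∑ x : Finset (Fin n),
        margX' l n a b x * relEnt (condY'X' l n a b x) (condYgX l n x)) ≤ δ * n →
      (∑ q : RazSample n,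
          if 100 * δ * n < relEnt (condY'T1 l n a b q.1.1) (condYT1 l n q.1.1)
          then razDist l n q * a q.2.1 * b q.2.2 else 0) ≤
        (1 / 100) * prAB l n a b) := by

  have hn0 : 0 < n := by omega
  have hd : 0 < δ * (n : ℝ) := mul_pos hδ (by exact_mod_cast hn0)
  have ha' : ∀ x, 0 ≤ a x := fun x => (ha x).1
  have hb' : ∀ y, 0 ≤ b y := fun y => (hb y).1
  have hFnn : ∀ t x, 0 ≤ Fx l n t x := fun t x => by
    rw [Fx]; split_ifs <;> norm_num
  have hGnn : ∀ t y, 0 ≤ Gy l n t y := fun t y => by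
    rw [Gy]
    apply div_nonneg _ (Nat.cast_nonneg _)
    split_ifs
    · exact Nat.cast_nonneg _
    · exact le_refl 0
  have hFynn : ∀ t y, 0 ≤ Fy l n t y := fun t y => by
    rw [Fy]; split_ifs <;> norm_num
  have hGxnn : ∀ t x, 0 ≤ Gx l n t x := fun t x => by
    rw [Gx]
    apply div_nonneg _ (Nat.cast_nonneg _)
    split_ifs
    · exact Nat.cast_nonneg _
    · exact le_refl 0
  constructor
  · -- part 1
    intro hEhyp
    have em : ∀ y, margY' l n a b y =
        (∑ t, ∑ x, lam (Fx l n) (Gy l n) a b t x y) /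
          ∑ t, ∑ x, ∑ y, lam (Fx l n) (Gy l n) a b t x y := by
      intro y
      show (∑ q : RazSample n, if q.2.2 = y then razDist l n q * a q.2.1 * b q.2.2 else 0) /
          prAB l n a b = _
      rw [bridge3 l n hl hn a b y, bridge5 l n hl hn a b]
    have ecx : ∀ y, condX'Y' l n a b y = fun x =>
        (∑ t, lam (Fx l n) (Gy l n) a b t x y) /
          ∑ t, ∑ x, lam (Fx l n) (Gy l n) a b t x y := by
      intro y; funext x
      show (∑ q : RazSample n, if q.2.1 = x ∧ q.2.2 = y then
          razDist l n q * a q.2.1 * b q.2.2 else 0) /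
        (∑ q : RazSample n, if q.2.2 = y then razDist l n q * a q.2.1 * b q.2.2 else 0) = _
      rw [bridge4 l n hl hn a b x y, bridge3 l n hl hn a b y]
    have ecxg : ∀ y, condXgY l n y = fun x =>
        (∑ t, nu (Fx l n) (Gy l n) t x y) / ∑ t, ∑ x, nu (Fx l n) (Gy l n) t x y := by
      intro y; funext x
      show (∑ q : RazSample n, if q.2.1 = x ∧ q.2.2 = y then razDist l n q else 0) /
        (∑ q : RazSample n, if q.2.2 = y then razDist l n q else 0) = _
      rw [bridge4n l n hl hn x y, bridge3n l n hl hn y]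
    simp only [em, ecx, ecxg] at hEhyp
    have hZ : 0 < ∑ t, ∑ x, ∑ y, lam (Fx l n) (Gy l n) a b t x y := by
      rw [← bridge5 l n hl hn a b]; exact hAB
    have habs := abstract_bound (Fx l n) (Gy l n) a b hFnn hGnn ha' hb'
      (δ * n) hd hZ hEhyp
    have et : ∀ t, condX'T2 l n a b t = fun x =>
        (∑ y, lam (Fx l n) (Gy l n) a b t x y) /
          ∑ x, ∑ y, lam (Fx l n) (Gy l n) a b t x y := by
      intro t; funext x
      show (∑ q : RazSample n, if q.1.2.1 = t ∧ q.2.1 = x then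
          razDist l n q * a q.2.1 * b q.2.2 else 0) /
        (∑ q : RazSample n, if q.1.2.1 = t then razDist l n q * a q.2.1 * b q.2.2 else 0) = _
      rw [bridge1 l n hl hn a b t x, bridge2 l n hl hn a b t]
    have etn : ∀ t, condXT2 l n t = fun x =>
        (∑ y, nu (Fx l n) (Gy l n) t x y) / ∑ x, ∑ y, nu (Fx l n) (Gy l n) t x y := by
      intro t; funext x
      show (∑ q : RazSample n, if q.1.2.1 = t ∧ q.2.1 = x then razDist l n q else 0) /
        (∑ q : RazSample n, if q.1.2.1 = t then razDist l n q else 0) = _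
      rw [bridge1n l n hl hn t x, bridge2n l n hl hn t]
    have hgoal : (∑ q : RazSample n,
        if 100 * δ * n < relEnt (condX'T2 l n a b q.1.2.1) (condXT2 l n q.1.2.1)
        then razDist l n q * a q.2.1 * b q.2.2 else 0) =
      ∑ t, if 100 * (δ * (n:ℝ)) < relEnt
            (fun x => (∑ y, lam (Fx l n) (Gy l n) a b t x y) /
              ∑ x, ∑ y, lam (Fx l n) (Gy l n) a b t x y)
            (fun x => (∑ y, nu (Fx l n) (Gy l n) t x y) /
              ∑ x, ∑ y, nu (Fx l n) (Gy l n) t x y)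
          then ∑ x, ∑ y, lam (Fx l n) (Gy l n) a b t x y else 0 := by
      rw [grp_full (fun q : RazSample n => q.1.2.1)
        (fun q => if 100 * δ * n < relEnt (condX'T2 l n a b q.1.2.1) (condXT2 l n q.1.2.1)
          then razDist l n q * a q.2.1 * b q.2.2 else 0)]
      refine Finset.sum_congr rfl fun t _ => ?_
      have hcond : (100 * δ * (n:ℝ) < relEnt (condX'T2 l n a b t) (condXT2 l n t)) ↔
          (100 * (δ * (n:ℝ)) < relEnt
            (fun x => (∑ y, lam (Fx l n) (Gy l n) a b t x y) /
              ∑ x, ∑ y, lam (Fx l n) (Gy l n) a b t x y)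
            (fun x => (∑ y, nu (Fx l n) (Gy l n) t x y) /
              ∑ x, ∑ y, nu (Fx l n) (Gy l n) t x y)) := by
        rw [et t, etn t, mul_assoc]
      by_cases hC : 100 * (δ * (n:ℝ)) < relEnt
            (fun x => (∑ y, lam (Fx l n) (Gy l n) a b t x y) /
              ∑ x, ∑ y, lam (Fx l n) (Gy l n) a b t x y)
            (fun x => (∑ y, nu (Fx l n) (Gy l n) t x y) /
              ∑ x, ∑ y, nu (Fx l n) (Gy l n) t x y)
      · rw [if_pos hC, ← bridge2 l n hl hn a b t]
        refine Finset.sum_congr rfl fun q _ => ?_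
        by_cases h : q.1.2.1 = t
        · rw [if_pos h, h, if_pos (hcond.mpr hC), if_pos rfl]
        · rw [if_neg h, if_neg h]
      · rw [if_neg hC]
        apply Finset.sum_eq_zero
        intro q _
        by_cases h : q.1.2.1 = t
        · rw [if_pos h, h, if_neg (fun hh => hC (hcond.mp hh))]
        · rw [if_neg h]
    rw [hgoal, bridge5 l n hl hn a b]
    exact habs
  · -- part 2
    intro hEhyp
    have em : ∀ x, margX' l n a b x =
        (∑ t, ∑ y, lam (Fy l n) (Gx l n) b a t y x) /
          ∑ t, ∑ y, ∑ x, lam (Fy l n) (Gx l n) b a t y x := by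
      intro x
      show (∑ q : RazSample n, if q.2.1 = x then razDist l n q * a q.2.1 * b q.2.2 else 0) /
          prAB l n a b = _
      rw [bridge3' l n hl hn a b x, bridge5' l n hl hn a b]
    have ecy : ∀ x, condY'X' l n a b x = fun y =>
        (∑ t, lam (Fy l n) (Gx l n) b a t y x) /
          ∑ t, ∑ y, lam (Fy l n) (Gx l n) b a t y x := by
      intro x; funext y
      show (∑ q : RazSample n, if q.2.1 = x ∧ q.2.2 = y then
          razDist l n q * a q.2.1 * b q.2.2 else 0) /
        (∑ q : RazSample n, if q.2.1 = x then razDist l n q * a q.2.1 * b q.2.2 else 0) = _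
      rw [bridge4' l n hl hn a b x y, bridge3' l n hl hn a b x]
    have ecyg : ∀ x, condYgX l n x = fun y =>
        (∑ t, nu (Fy l n) (Gx l n) t y x) / ∑ t, ∑ y, nu (Fy l n) (Gx l n) t y x := by
      intro x; funext y
      show (∑ q : RazSample n, if q.2.1 = x ∧ q.2.2 = y then razDist l n q else 0) /
        (∑ q : RazSample n, if q.2.1 = x then razDist l n q else 0) = _
      rw [bridge4n' l n hl hn x y, bridge3n' l n hl hn x]
    simp only [em, ecy, ecyg] at hEhyp
    have hZ : 0 < ∑ t, ∑ y, ∑ x, lam (Fy l n) (Gx l n) b a t y x := by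
      rw [← bridge5' l n hl hn a b]; exact hAB
    have habs := abstract_bound (Fy l n) (Gx l n) b a hFynn hGxnn hb' ha'
      (δ * n) hd hZ hEhyp
    have et : ∀ t, condY'T1 l n a b t = fun y =>
        (∑ x, lam (Fy l n) (Gx l n) b a t y x) /
          ∑ y, ∑ x, lam (Fy l n) (Gx l n) b a t y x := by
      intro t; funext y
      show (∑ q : RazSample n, if q.1.1 = t ∧ q.2.2 = y then
          razDist l n q * a q.2.1 * b q.2.2 else 0) /
        (∑ q : RazSample n, if q.1.1 = t then razDist l n q * a q.2.1 * b q.2.2 else 0) = _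
      rw [bridge1' l n hl hn a b t y, bridge2' l n hl hn a b t]
    have etn : ∀ t, condYT1 l n t = fun y =>
        (∑ x, nu (Fy l n) (Gx l n) t y x) / ∑ y, ∑ x, nu (Fy l n) (Gx l n) t y x := by
      intro t; funext y
      show (∑ q : RazSample n, if q.1.1 = t ∧ q.2.2 = y then razDist l n q else 0) /
        (∑ q : RazSample n, if q.1.1 = t then razDist l n q else 0) = _
      rw [bridge1n' l n hl hn t y, bridge2n' l n hl hn t]
    have hgoal : (∑ q : RazSample n,
        if 100 * δ * n < relEnt (condY'T1 l n a b q.1.1) (condYT1 l n q.1.1)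
        then razDist l n q * a q.2.1 * b q.2.2 else 0) =
      ∑ t, if 100 * (δ * (n:ℝ)) < relEnt
            (fun y => (∑ x, lam (Fy l n) (Gx l n) b a t y x) /
              ∑ y, ∑ x, lam (Fy l n) (Gx l n) b a t y x)
            (fun y => (∑ x, nu (Fy l n) (Gx l n) t y x) /
              ∑ y, ∑ x, nu (Fy l n) (Gx l n) t y x)
          then ∑ y, ∑ x, lam (Fy l n) (Gx l n) b a t y x else 0 := by
      rw [grp_full (fun q : RazSample n => q.1.1)
        (fun q => if 100 * δ * n < relEnt (condY'T1 l n a b q.1.1) (condYT1 l n q.1.1)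
          then razDist l n q * a q.2.1 * b q.2.2 else 0)]
      refine Finset.sum_congr rfl fun t _ => ?_
      have hcond : (100 * δ * (n:ℝ) < relEnt (condY'T1 l n a b t) (condYT1 l n t)) ↔
          (100 * (δ * (n:ℝ)) < relEnt
            (fun y => (∑ x, lam (Fy l n) (Gx l n) b a t y x) /
              ∑ y, ∑ x, lam (Fy l n) (Gx l n) b a t y x)
            (fun y => (∑ x, nu (Fy l n) (Gx l n) t y x) /
              ∑ y, ∑ x, nu (Fy l n) (Gx l n) t y x)) := by
        rw [et t, etn t, mul_assoc]
      by_cases hC : 100 * (δ * (n:ℝ)) < relEnt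
            (fun y => (∑ x, lam (Fy l n) (Gx l n) b a t y x) /
              ∑ y, ∑ x, lam (Fy l n) (Gx l n) b a t y x)
            (fun y => (∑ x, nu (Fy l n) (Gx l n) t y x) /
              ∑ y, ∑ x, nu (Fy l n) (Gx l n) t y x)
      · rw [if_pos hC, ← bridge2' l n hl hn a b t]
        refine Finset.sum_congr rfl fun q _ => ?_
        by_cases h : q.1.1 = t
        · rw [if_pos h, h, if_pos (hcond.mpr hC), if_pos rfl]
        · rw [if_neg h, if_neg h]
      · rw [if_neg hC]
        apply Finset.sum_eq_zero
        intro q _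
        by_cases h : q.1.1 = t
        · rw [if_pos h, h, if_neg (fun hh => hC (hcond.mp hh))]
        · rw [if_neg h]
    rw [hgoal, bridge5' l n hl hn a b]
    exact habs

end
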